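/- Let {x₁,...,x_N} be a finite multiset of reals and let X₁,...,Xₙ (n < N) be drawn uniformly from it without replacement. With a = minᵢ xᵢ, b = maxᵢ xᵢ, x̄ = (1/N)Σᵢ xᵢ, σ² = (1/N)Σᵢ(xᵢ - x̄)², for any t > 0 we have P(|Σᵢ₌₁ⁿ Xᵢ - n·x̄| ≥ t) ≤ 2·exp(-(t²/2)/(σ²n + (b-a)t/3)). -/

import Mathlib

open Finset

section BernsteinAux
open Finset Function

lemma exp_le_quad {z u : ℝ} (hz : |z| ≤ u) (hu : u < 3) :
    Real.exp z ≤ 1 + z + z ^ 2 / 2 * (3 / (3 - u)) := by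
  have hu0 : 0 ≤ u := le_trans (abs_nonneg z) hz
  have hsum : Summable (fun k : ℕ => z ^ k / k.factorial) :=
    Real.summable_pow_div_factorial z
  have hexp : Real.exp z = ∑' k : ℕ, z ^ k / k.factorial := by
    rw [Real.exp_eq_exp_ℝ, NormedSpace.exp_eq_tsum_div]
  have hsplit := Summable.sum_add_tsum_nat_add 2 hsum
  have hfirst : ∑ k ∈ Finset.range 2, z ^ k / k.factorial = 1 + z := by
    simp [Finset.sum_range_succ]
  have hgeo_sum : Summable (fun k : ℕ => z ^ 2 / 2 * (u / 3) ^ k) := by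
    apply Summable.mul_left
    apply summable_geometric_of_lt_one (by positivity)
    linarith
  have hfact : ∀ k : ℕ, (2 * 3 ^ k : ℝ) ≤ (k + 2).factorial := by
    intro k
    induction k with
    | zero => norm_num [Nat.factorial]
    | succ m ih =>
      have : ((m + 3).factorial : ℝ) = (m + 3) * (m + 2).factorial := by
        have : (m + 3).factorial = (m + 3) * (m + 2).factorial := rfl
        rw [this]; push_cast; ring
      calc (2 * 3 ^ (m + 1) : ℝ) = 3 * (2 * 3 ^ m) := by ring
        _ ≤ 3 * (m + 2).factorial := by
            have := Nat.factorial_pos (m + 2)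
            nlinarith [ih]
        _ ≤ (m + 3) * (m + 2).factorial := by
            have := Nat.factorial_pos (m + 2)
            have : (0:ℝ) < (m + 2).factorial := by exact_mod_cast this
            nlinarith
        _ = ((m + 1) + 2).factorial := by
            rw [show (m+1)+2 = m + 3 from rfl]
            have : (m + 3).factorial = (m + 3) * (m + 2).factorial := rfl
            rw [this]; push_cast; ring
  have hterm : ∀ k : ℕ, z ^ (k + 2) / (k + 2).factorial ≤ z ^ 2 / 2 * (u / 3) ^ k := by
    intro k
    have h1 : z ^ (k + 2) ≤ z ^ 2 * u ^ k := by
      calc z ^ (k + 2) ≤ |z ^ (k + 2)| := le_abs_self _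
        _ = |z| ^ 2 * |z| ^ k := by rw [abs_pow]; ring
        _ ≤ |z| ^ 2 * u ^ k := by
            apply mul_le_mul_of_nonneg_left (pow_le_pow_left₀ (abs_nonneg z) hz k)
            positivity
        _ = z ^ 2 * u ^ k := by rw [sq_abs]
    have h2 : (2 * 3 ^ k : ℝ) ≤ (k + 2).factorial := hfact k
    have hf : (0:ℝ) < (k + 2).factorial := by exact_mod_cast Nat.factorial_pos (k+2)
    rw [div_le_iff₀ hf]
    calc z ^ (k + 2) ≤ z ^ 2 * u ^ k := h1
      _ = (z ^ 2 / 2 * (u / 3) ^ k) * (2 * 3 ^ k) := by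
          field_simp
          rw [mul_assoc, ← mul_pow, div_mul_cancel₀ _ (by norm_num : (3:ℝ) ≠ 0)]
      _ ≤ (z ^ 2 / 2 * (u / 3) ^ k) * (k + 2).factorial := by
          apply mul_le_mul_of_nonneg_left h2
          positivity
  have htail : ∑' k : ℕ, z ^ (k + 2) / (k + 2).factorial ≤
      z ^ 2 / 2 * (3 / (3 - u)) := by
    have hs2 : Summable (fun k : ℕ => z ^ (k + 2) / (k + 2).factorial) := by
      exact_mod_cast (summable_nat_add_iff 2).mpr hsum
    calc ∑' k : ℕ, z ^ (k + 2) / (k + 2).factorial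
        ≤ ∑' k : ℕ, z ^ 2 / 2 * (u / 3) ^ k := Summable.tsum_le_tsum hterm hs2 hgeo_sum
      _ = z ^ 2 / 2 * (1 - u / 3)⁻¹ := by
          rw [tsum_mul_left, tsum_geometric_of_lt_one (by positivity) (by linarith)]
      _ = z ^ 2 / 2 * (3 / (3 - u)) := by
          congr 1
          rw [inv_eq_one_div, div_eq_div_iff (by linarith) (by linarith)]
          ring
  have : Real.exp z = (1 + z) + ∑' k : ℕ, z ^ (k + 2) / (k + 2).factorial := by
    rw [hexp, ← hsplit, hfirst]
  rw [this]
  linarith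

open Finset Function

variable {N k n : ℕ}

/-- complement of the range of an embedding, as a Finset -/
def cof (g : Fin k ↪ Fin N) : Finset (Fin N) :=
  univ.filter (fun j => ∀ i, g i ≠ j)

lemma cof_eq (g : Fin k ↪ Fin N) : cof g = (univ.image g)ᶜ := by
  ext j
  simp [cof]

lemma cof_card (g : Fin k ↪ Fin N) : (cof g).card = N - k := by
  rw [cof_eq, card_compl, card_image_of_injective _ g.injective]
  simp

lemma sum_cof (w : Fin N → ℝ) (g : Fin k ↪ Fin N) :
    ∑ j ∈ cof g, w j = (∑ j, w j) - ∑ i, w (g i) := by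
  have h1 : ∑ j ∈ univ.image g, w j = ∑ i, w (g i) :=
    Finset.sum_image (fun a _ b _ h => g.injective h)
  have h2 := Finset.sum_add_sum_compl (univ.image g) w
  rw [cof_eq]
  linarith

lemma sum_succ (w : Fin N → ℝ) :
    ∑ f : Fin (k+1) ↪ Fin N, ∏ i, w (f i) =
      ∑ g : Fin k ↪ Fin N, (∏ i, w (g i)) * ∑ j ∈ cof g, w j := by
  classical
  rw [← Equiv.sum_comp (Equiv.embeddingFinSucc k (Fin N)).symm
    (fun f => ∏ i, w (f i)), ← Finset.univ_sigma_univ, Finset.sum_sigma]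
  refine Finset.sum_congr rfl (fun g _ => ?_)
  have hsub : ∀ j : {j // j ∉ Set.range g},
      (∏ i, w ((Equiv.embeddingFinSucc k (Fin N)).symm ⟨g, j⟩ i)) =
        w j.1 * ∏ i, w (g i) := by
    intro j
    rw [Fin.prod_univ_succ]
    simp [Equiv.coe_embeddingFinSucc_symm]
  rw [Finset.sum_congr rfl (fun j _ => hsub j)]
  rw [← Finset.sum_mul, mul_comm]
  congr 1
  rw [← Finset.sum_subtype (cof g) (fun j => by simp [cof, Set.range, eq_comm]) w]

/-- product over all but one coordinate -/
def Qf (w : Fin N → ℝ) (g : Fin k ↪ Fin N) (i : Fin k) : ℝ :=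
  ∏ i' ∈ univ.erase i, w (g i')

lemma triple_sum (F : (Fin k ↪ Fin N) → Fin k → Fin N → ℝ) :
    ∑ p ∈ (univ : Finset ((Fin k ↪ Fin N) × Fin k × Fin N)).filter
        (fun p => ∀ i', p.1 i' ≠ p.2.2), F p.1 p.2.1 p.2.2 =
      ∑ g : Fin k ↪ Fin N, ∑ i : Fin k, ∑ j ∈ cof g, F g i j := by
  classical
  rw [Finset.sum_filter, Fintype.sum_prod_type]
  refine Finset.sum_congr rfl (fun g _ => ?_)
  rw [Fintype.sum_prod_type]
  refine Finset.sum_congr rfl (fun i _ => ?_)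
  simp only [cof, Finset.sum_filter]

lemma setValue_mem {g : Fin k ↪ Fin N} {i : Fin k} {j : Fin N}
    (hj : ∀ i', g i' ≠ j) : ∀ i', (Embedding.setValue g i j) i' ≠ g i := by
  intro i'
  by_cases h : i' = i
  · subst h
    rw [Embedding.setValue_eq]
    exact fun hh => (hj i') hh.symm
  · rw [Embedding.setValue_eq_of_ne h (hj i')]
    exact fun hh => h (g.injective hh)

lemma setValue_invol {g : Fin k ↪ Fin N} {i : Fin k} {j : Fin N}
    (hj : ∀ i', g i' ≠ j) :
    Embedding.setValue (Embedding.setValue g i j) i (g i) = g := by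
  ext i'
  by_cases h : i' = i
  · subst h
    rw [Embedding.setValue_eq]
  · have h1 : (Embedding.setValue g i j) i' = g i' :=
      Embedding.setValue_eq_of_ne h (hj i')
    have h2 : (Embedding.setValue g i j) i' ≠ g i := by
      rw [h1]; exact fun hh => h (g.injective hh)
    rw [Embedding.setValue_eq_of_ne h h2, h1]

lemma swap_sum (w : Fin N → ℝ) :
    (∑ g : Fin k ↪ Fin N, ∑ i : Fin k, ∑ j ∈ cof g, w j ^ 2 * Qf w g i) =
      ∑ g : Fin k ↪ Fin N, ∑ i : Fin k, ∑ j ∈ cof g, w (g i) ^ 2 * Qf w g i := by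
  classical
  rw [← triple_sum, ← triple_sum]
  refine Finset.sum_nbij'
    (fun p => (Embedding.setValue p.1 p.2.1 p.2.2, p.2.1, p.1 p.2.1))
    (fun p => (Embedding.setValue p.1 p.2.1 p.2.2, p.2.1, p.1 p.2.1))
    ?_ ?_ ?_ ?_ ?_
  · rintro ⟨g, i, j⟩ hp
    simp only [Finset.mem_filter, Finset.mem_univ, true_and] at hp ⊢
    exact setValue_mem hp
  · rintro ⟨g, i, j⟩ hp
    simp only [Finset.mem_filter, Finset.mem_univ, true_and] at hp ⊢
    exact setValue_mem hp
  · rintro ⟨g, i, j⟩ hp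
    simp only [Finset.mem_filter, Finset.mem_univ, true_and] at hp
    refine Prod.ext (setValue_invol hp) (Prod.ext rfl ?_)
    exact Embedding.setValue_eq g i j
  · rintro ⟨g, i, j⟩ hp
    simp only [Finset.mem_filter, Finset.mem_univ, true_and] at hp
    refine Prod.ext (setValue_invol hp) (Prod.ext rfl ?_)
    exact Embedding.setValue_eq g i j
  · rintro ⟨g, i, j⟩ hp
    simp only [Finset.mem_filter, Finset.mem_univ, true_and] at hp
    simp only
    rw [Embedding.setValue_eq]
    congr 1
    refine Finset.prod_congr rfl (fun i' hi' => ?_)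
    have h : i' ≠ i := Finset.ne_of_mem_erase hi'
    rw [Embedding.setValue_eq_of_ne h (hp i')]

lemma star_ineq (hk : k ≤ N) (w : Fin N → ℝ) (hw : ∀ j, 0 ≤ w j) :
    (k : ℝ) * ∑ g : Fin k ↪ Fin N, (∏ i, w (g i)) * ∑ j ∈ cof g, w j ≤
      ((N : ℝ) - k) * ∑ g : Fin k ↪ Fin N, (∏ i, w (g i)) * ∑ i, w (g i) := by
  classical
  have hQ : ∀ (g : Fin k ↪ Fin N) (i : Fin k),
      (∏ i', w (g i')) = w (g i) * Qf w g i :=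
    fun g i => (Finset.mul_prod_erase univ (fun i' => w (g i')) (mem_univ i)).symm
  have hQnn : ∀ (g : Fin k ↪ Fin N) (i : Fin k), 0 ≤ Qf w g i :=
    fun g i => Finset.prod_nonneg (fun i' _ => hw _)
  have hL : (k : ℝ) * ∑ g : Fin k ↪ Fin N, (∏ i, w (g i)) * ∑ j ∈ cof g, w j =
      ∑ g : Fin k ↪ Fin N, ∑ i : Fin k, ∑ j ∈ cof g, (w (g i) * w j) * Qf w g i := by
    rw [Finset.mul_sum]
    refine Finset.sum_congr rfl (fun g _ => ?_)
    have h1 : ∀ i : Fin k, ∑ j ∈ cof g, (w (g i) * w j) * Qf w g i =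
        (∏ i', w (g i')) * ∑ j ∈ cof g, w j := by
      intro i
      rw [Finset.mul_sum]
      refine Finset.sum_congr rfl (fun j _ => ?_)
      rw [hQ g i]; ring
    rw [Finset.sum_congr rfl (fun i _ => h1 i), Finset.sum_const, card_univ,
      Fintype.card_fin, nsmul_eq_mul]
  have hR : ((N : ℝ) - k) * ∑ g : Fin k ↪ Fin N, (∏ i, w (g i)) * ∑ i, w (g i) =
      ∑ g : Fin k ↪ Fin N, ∑ i : Fin k, ∑ j ∈ cof g, w (g i) ^ 2 * Qf w g i := by
    rw [Finset.mul_sum]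
    refine Finset.sum_congr rfl (fun g _ => ?_)
    have h2 : ∀ i : Fin k, ∑ j ∈ cof g, w (g i) ^ 2 * Qf w g i =
        ((N : ℝ) - k) * (w (g i) ^ 2 * Qf w g i) := by
      intro i
      rw [Finset.sum_const, cof_card, nsmul_eq_mul]
      congr 1
      rw [Nat.cast_sub hk]
    rw [Finset.sum_congr rfl (fun i _ => h2 i), ← Finset.mul_sum]
    congr 1
    rw [Finset.mul_sum]
    refine Finset.sum_congr rfl (fun i _ => ?_)
    rw [hQ g i]; ring
  rw [hL, hR]
  have key : ∑ g : Fin k ↪ Fin N, ∑ i : Fin k, ∑ j ∈ cof g, (w (g i) * w j) * Qf w g i ≤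
      (∑ g : Fin k ↪ Fin N, ∑ i : Fin k, ∑ j ∈ cof g, w (g i) ^ 2 * Qf w g i) / 2 +
      (∑ g : Fin k ↪ Fin N, ∑ i : Fin k, ∑ j ∈ cof g, w j ^ 2 * Qf w g i) / 2 := by
    rw [← add_div, ← Finset.sum_add_distrib]
    rw [Finset.sum_div]
    refine Finset.sum_le_sum (fun g _ => ?_)
    rw [← Finset.sum_add_distrib, Finset.sum_div]
    refine Finset.sum_le_sum (fun i _ => ?_)
    rw [← Finset.sum_add_distrib, Finset.sum_div]
    refine Finset.sum_le_sum (fun j _ => ?_)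
    have := hQnn g i
    have h3 : w (g i) * w j ≤ (w (g i) ^ 2 + w j ^ 2) / 2 := by nlinarith [sq_nonneg (w (g i) - w j)]
    calc (w (g i) * w j) * Qf w g i ≤ ((w (g i) ^ 2 + w j ^ 2) / 2) * Qf w g i :=
          mul_le_mul_of_nonneg_right h3 this
      _ = (w (g i) ^ 2 * Qf w g i + w j ^ 2 * Qf w g i) / 2 := by ring
  calc ∑ g : Fin k ↪ Fin N, ∑ i : Fin k, ∑ j ∈ cof g, (w (g i) * w j) * Qf w g i
      ≤ (∑ g : Fin k ↪ Fin N, ∑ i : Fin k, ∑ j ∈ cof g, w (g i) ^ 2 * Qf w g i) / 2 +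
        (∑ g : Fin k ↪ Fin N, ∑ i : Fin k, ∑ j ∈ cof g, w j ^ 2 * Qf w g i) / 2 := key
    _ = ∑ g : Fin k ↪ Fin N, ∑ i : Fin k, ∑ j ∈ cof g, w (g i) ^ 2 * Qf w g i := by
        rw [swap_sum]; ring

lemma newton_step (hk : k < N) (w : Fin N → ℝ) (hw : ∀ j, 0 ≤ w j) :
    (N : ℝ) * ∑ f : Fin (k+1) ↪ Fin N, ∏ i, w (f i) ≤
      ((N : ℝ) - k) * ((∑ j, w j) * ∑ g : Fin k ↪ Fin N, ∏ i, w (g i)) := by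
  rw [sum_succ w]
  have hsplit : ∑ g : Fin k ↪ Fin N, (∏ i, w (g i)) * ∑ j ∈ cof g, w j =
      (∑ j, w j) * (∑ g : Fin k ↪ Fin N, ∏ i, w (g i)) -
        ∑ g : Fin k ↪ Fin N, (∏ i, w (g i)) * ∑ i, w (g i) := by
    rw [Finset.mul_sum, ← Finset.sum_sub_distrib]
    refine Finset.sum_congr rfl (fun g _ => ?_)
    rw [sum_cof]; ring
  have hstar := star_ineq hk.le w hw
  have hkN : (k : ℝ) ≤ (N : ℝ) := by exact_mod_cast hk.le
  rw [hsplit] at hstar ⊢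
  nlinarith [hstar]

lemma maclaurin (w : Fin N → ℝ) (hw : ∀ j, 0 ≤ w j) :
    ∀ n, n ≤ N → (N : ℝ) ^ n * ∑ f : Fin n ↪ Fin N, ∏ i, w (f i) ≤
      (N.descFactorial n : ℝ) * (∑ j, w j) ^ n := by
  intro n
  induction n with
  | zero => simp [Finset.card_univ, Fintype.card_embedding_eq]
  | succ m ih =>
    intro h
    have hm : m < N := Nat.lt_of_succ_le h
    have hT : (0:ℝ) ≤ ∑ j, w j := Finset.sum_nonneg (fun j _ => hw j)
    have hNm : (0:ℝ) ≤ (N : ℝ) - m := by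
      have : (m : ℝ) ≤ N := by exact_mod_cast hm.le
      linarith
    calc (N : ℝ) ^ (m+1) * ∑ f : Fin (m+1) ↪ Fin N, ∏ i, w (f i)
        = (N : ℝ) ^ m * ((N : ℝ) * ∑ f : Fin (m+1) ↪ Fin N, ∏ i, w (f i)) := by ring
      _ ≤ (N : ℝ) ^ m * (((N : ℝ) - m) * ((∑ j, w j) * ∑ g : Fin m ↪ Fin N, ∏ i, w (g i))) :=
          mul_le_mul_of_nonneg_left (newton_step hm w hw) (by positivity)
      _ = (((N : ℝ) - m) * (∑ j, w j)) * ((N : ℝ) ^ m * ∑ g : Fin m ↪ Fin N, ∏ i, w (g i)) := by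
          ring
      _ ≤ (((N : ℝ) - m) * (∑ j, w j)) * ((N.descFactorial m : ℝ) * (∑ j, w j) ^ m) :=
          mul_le_mul_of_nonneg_left (ih hm.le) (mul_nonneg hNm hT)
      _ = (N.descFactorial (m+1) : ℝ) * (∑ j, w j) ^ (m+1) := by
          rw [Nat.descFactorial_succ, Nat.cast_mul, Nat.cast_sub hm.le]
          ring

lemma tail_bound (hn1 : 1 ≤ n) (hnN : n ≤ N)
    (y : Fin N → ℝ) (M σ2 : ℝ)
    (hy0 : ∑ j, y j = 0) (hyM : ∀ j, |y j| ≤ M)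
    (hyv : ∑ j, y j ^ 2 = N * σ2) (hσ : 0 < σ2) (t : ℝ) (ht : 0 < t)
    [DecidablePred fun f : Fin n ↪ Fin N => t ≤ ∑ i, y (f i)] :
    ((univ.filter (fun f : Fin n ↪ Fin N => t ≤ ∑ i, y (f i))).card : ℝ) ≤
      (N.descFactorial n : ℝ) * Real.exp (-(t ^ 2 / 2) / (σ2 * n + M * t / 3)) := by
  have hN : 0 < N := lt_of_lt_of_le hn1 hnN
  have hM : 0 ≤ M := le_trans (abs_nonneg _) (hyM ⟨0, hN⟩)
  have hn1R : (1:ℝ) ≤ (n:ℝ) := by exact_mod_cast hn1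
  set D : ℝ := σ2 * n + M * t / 3 with hDdef
  have hD : 0 < D := by
    have : (0:ℝ) < σ2 * n := by positivity
    have : (0:ℝ) ≤ M * t / 3 := by positivity
    unfold D; linarith
  set lam : ℝ := t / D with hlamdef
  have hlam : 0 < lam := div_pos ht hD
  have hu : lam * M < 3 := by
    rw [hlamdef, div_mul_eq_mul_div, div_lt_iff₀ hD]
    have h1 : (0:ℝ) < σ2 * n := by positivity
    unfold D; nlinarith
  set c : ℝ := 3 / (3 - lam * M) with hcdef
  set w : Fin N → ℝ := fun j => Real.exp (lam * y j) with hwdef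
  have hwpos : ∀ j, 0 < w j := fun j => Real.exp_pos _
  have hwnn : ∀ j, 0 ≤ w j := fun j => (hwpos j).le
  -- Chernoff step
  have hprodf : ∀ f : Fin n ↪ Fin N, ∏ i, w (f i) = Real.exp (lam * ∑ i, y (f i)) := by
    intro f
    rw [Finset.mul_sum, Real.exp_sum]
  have hA : ((univ.filter (fun f : Fin n ↪ Fin N => t ≤ ∑ i, y (f i))).card : ℝ) *
      Real.exp (lam * t) ≤ ∑ f : Fin n ↪ Fin N, ∏ i, w (f i) := by
    have h1 : ∀ f ∈ univ.filter (fun f : Fin n ↪ Fin N => t ≤ ∑ i, y (f i)),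
        Real.exp (lam * t) ≤ ∏ i, w (f i) := by
      intro f hf
      rw [Finset.mem_filter] at hf
      rw [hprodf f]
      exact Real.exp_le_exp.mpr (mul_le_mul_of_nonneg_left hf.2 hlam.le)
    calc ((univ.filter (fun f : Fin n ↪ Fin N => t ≤ ∑ i, y (f i))).card : ℝ) *
          Real.exp (lam * t)
        = (univ.filter (fun f : Fin n ↪ Fin N => t ≤ ∑ i, y (f i))).card •
            Real.exp (lam * t) := by rw [nsmul_eq_mul]
      _ ≤ ∑ f ∈ univ.filter (fun f : Fin n ↪ Fin N => t ≤ ∑ i, y (f i)), ∏ i, w (f i) :=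
          Finset.card_nsmul_le_sum _ _ _ h1
      _ ≤ ∑ f : Fin n ↪ Fin N, ∏ i, w (f i) :=
          Finset.sum_le_sum_of_subset_of_nonneg (Finset.filter_subset _ _)
            (fun f _ _ => Finset.prod_nonneg (fun i _ => hwnn _))
  -- mean of w bound
  set E : ℝ := 1 + σ2 * lam ^ 2 / 2 * c with hEdef
  have hc0 : 0 < c := by
    rw [hcdef]
    apply div_pos (by norm_num)
    linarith
  have hE1 : (1:ℝ) ≤ E := by
    have : 0 ≤ σ2 * lam ^ 2 / 2 * c := by positivity
    unfold E; linarith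
  have hwsum : ∑ j, w j ≤ N * E := by
    have hper : ∀ j, w j ≤ 1 + lam * y j + (lam * y j) ^ 2 / 2 * c := by
      intro j
      refine exp_le_quad ?_ hu
      rw [abs_mul, abs_of_pos hlam]
      exact mul_le_mul_of_nonneg_left (hyM j) hlam.le
    calc ∑ j, w j ≤ ∑ j, (1 + lam * y j + (lam * y j) ^ 2 / 2 * c) :=
          Finset.sum_le_sum (fun j _ => hper j)
      _ = ∑ j, ((1:ℝ)) + ∑ j, lam * y j + ∑ j, (lam ^ 2 * (c / 2)) * y j ^ 2 := by
          rw [← Finset.sum_add_distrib, ← Finset.sum_add_distrib]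
          exact Finset.sum_congr rfl (fun j _ => by ring)
      _ = N * E := by
          rw [← Finset.mul_sum, ← Finset.mul_sum, hy0, hyv, Finset.sum_const, card_univ,
            Fintype.card_fin, nsmul_eq_mul]
          unfold E; ring
  -- Maclaurin step
  have hB : ∑ f : Fin n ↪ Fin N, ∏ i, w (f i) ≤ (N.descFactorial n : ℝ) * E ^ n := by
    have h1 := maclaurin w hwnn n hnN
    have h2 : (∑ j, w j) ^ n ≤ (N * E) ^ n :=
      pow_le_pow_left₀ (Finset.sum_nonneg (fun j _ => hwnn j)) hwsum n
    have hNpow : (0:ℝ) < (N:ℝ) ^ n := by positivity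
    have h3 : (N:ℝ) ^ n * ∑ f : Fin n ↪ Fin N, ∏ i, w (f i) ≤
        (N:ℝ) ^ n * ((N.descFactorial n : ℝ) * E ^ n) := by
      calc (N:ℝ) ^ n * ∑ f : Fin n ↪ Fin N, ∏ i, w (f i)
          ≤ (N.descFactorial n : ℝ) * (∑ j, w j) ^ n := h1
        _ ≤ (N.descFactorial n : ℝ) * (N * E) ^ n := by
            apply mul_le_mul_of_nonneg_left h2 (by positivity)
        _ = (N:ℝ) ^ n * ((N.descFactorial n : ℝ) * E ^ n) := by
            rw [mul_pow]; ring
    exact le_of_mul_le_mul_left h3 hNpow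
  -- E ≤ exp
  have hC : E ^ n ≤ Real.exp ((n : ℝ) * (σ2 * lam ^ 2 / 2 * c)) := by
    have h1 : E ≤ Real.exp (σ2 * lam ^ 2 / 2 * c) := by
      have := Real.add_one_le_exp (σ2 * lam ^ 2 / 2 * c)
      unfold E; linarith
    calc E ^ n ≤ Real.exp (σ2 * lam ^ 2 / 2 * c) ^ n :=
          pow_le_pow_left₀ (by linarith) h1 n
      _ = Real.exp ((n : ℝ) * (σ2 * lam ^ 2 / 2 * c)) := by
          rw [← Real.exp_nat_mul]
  -- combine
  have hcard : ((univ.filter (fun f : Fin n ↪ Fin N => t ≤ ∑ i, y (f i))).card : ℝ) ≤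
      (N.descFactorial n : ℝ) *
        Real.exp ((n : ℝ) * (σ2 * lam ^ 2 / 2 * c) - lam * t) := by
    have h1 : ((univ.filter (fun f : Fin n ↪ Fin N => t ≤ ∑ i, y (f i))).card : ℝ) *
        Real.exp (lam * t) ≤ (N.descFactorial n : ℝ) *
          Real.exp ((n : ℝ) * (σ2 * lam ^ 2 / 2 * c)) := by
      calc ((univ.filter (fun f : Fin n ↪ Fin N => t ≤ ∑ i, y (f i))).card : ℝ) *
            Real.exp (lam * t) ≤ ∑ f : Fin n ↪ Fin N, ∏ i, w (f i) := hA
        _ ≤ (N.descFactorial n : ℝ) * E ^ n := hB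
        _ ≤ (N.descFactorial n : ℝ) *
              Real.exp ((n : ℝ) * (σ2 * lam ^ 2 / 2 * c)) := by
            apply mul_le_mul_of_nonneg_left hC (by positivity)
    refine le_of_mul_le_mul_right ?_ (Real.exp_pos (lam * t))
    rw [mul_assoc, ← Real.exp_add, sub_add_cancel]
    exact h1
  -- exponent identity
  have hc2 : c = D / (σ2 * n) := by
    have h3 : 3 - lam * M = 3 * σ2 * n / D := by
      rw [hlamdef]
      field_simp
      unfold D; ring
    have hσ' : σ2 ≠ 0 := hσ.ne'
    have hn0 : (n:ℝ) ≠ 0 := by linarith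
    have hD' : D ≠ 0 := hD.ne'
    rw [hcdef, h3]
    rw [div_div_eq_mul_div]
    rw [div_eq_div_iff (by positivity) (by positivity)]
    ring
  have hexpo : (n : ℝ) * (σ2 * lam ^ 2 / 2 * c) - lam * t = -(t ^ 2 / 2) / D := by
    rw [hc2, hlamdef]
    have hn0 : (n:ℝ) ≠ 0 := by linarith
    field_simp
    ring
  rw [← hexpo]
  exact hcard

end BernsteinAux

/-- Bernstein's inequality for sampling without replacement: drawing `n < N` values
uniformly without replacement (i.e. a uniformly random injection `Fin n ↪ Fin N`) from a
finite population `x : Fin N → ℝ`, with `a = min xᵢ`, `b = max xᵢ`, `x̄` the population mean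
and `σ²` the population variance, for any `t > 0` the probability that
`|∑ Xᵢ - n x̄| ≥ t` is at most `2 exp (-(t²/2)/(σ² n + (b-a) t / 3))`. -/
theorem bernstein_sampling_without_replacement
    (N n : ℕ) (hN : 0 < N) (hn : n < N) (x : Fin N → ℝ)
    (a b xbar σ2 : ℝ)
    (ha : a = ⨅ i, x i) (hb : b = ⨆ i, x i)
    (hxbar : xbar = (1 / (N : ℝ)) * ∑ i, x i)
    (hσ : σ2 = (1 / (N : ℝ)) * ∑ i, (x i - xbar) ^ 2)
    (t : ℝ) (ht : 0 < t) :
    haveI := Classical.decPred fun f : Fin n ↪ Fin N => t ≤ |(∑ i, x (f i)) - n * xbar|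
    ((Finset.univ.filter
        (fun f : Fin n ↪ Fin N => t ≤ |(∑ i, x (f i)) - n * xbar|)).card : ℝ) /
        ((Finset.univ : Finset (Fin n ↪ Fin N)).card : ℝ) ≤
      2 * Real.exp (-(t ^ 2 / 2) / (σ2 * n + (b - a) * t / 3)) := by
  suffices h : ∀ (_inst : DecidablePred fun f : Fin n ↪ Fin N =>
      t ≤ |(∑ i, x (f i)) - n * xbar|),
      ((Finset.univ.filter
        (fun f : Fin n ↪ Fin N => t ≤ |(∑ i, x (f i)) - n * xbar|)).card : ℝ) /
        ((Finset.univ : Finset (Fin n ↪ Fin N)).card : ℝ) ≤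
      2 * Real.exp (-(t ^ 2 / 2) / (σ2 * n + (b - a) * t / 3)) by
    exact h _
  intro _inst
  have hNR : (0:ℝ) < (N:ℝ) := by exact_mod_cast hN
  have hIcard : (((Finset.univ : Finset (Fin n ↪ Fin N)).card : ℕ) : ℝ) =
      (N.descFactorial n : ℝ) := by
    rw [Finset.card_univ, Fintype.card_embedding_eq, Fintype.card_fin, Fintype.card_fin]
  have hIpos : (0:ℝ) < ((Finset.univ : Finset (Fin n ↪ Fin N)).card : ℝ) := by
    rw [hIcard]
    have : N.descFactorial n ≠ 0 := fun h =>
      absurd (Nat.descFactorial_eq_zero_iff_lt.mp h) (not_lt.mpr hn.le)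
    exact_mod_cast Nat.pos_of_ne_zero this
  rw [div_le_iff₀ hIpos]
  -- trivial case n = 0
  rcases Nat.eq_zero_or_pos n with h0 | hpos
  · subst h0
    have hempty : (Finset.univ.filter
        (fun f : Fin 0 ↪ Fin N => t ≤ |(∑ i, x (f i)) - (0:ℕ) * xbar|)).card = 0 := by
      rw [Finset.card_eq_zero, Finset.filter_eq_empty_iff]
      intro f _
      simp only [Finset.univ_eq_empty, Finset.sum_empty, Nat.cast_zero, zero_mul, sub_zero,
        abs_zero]
      push_neg
      exact ht
    rw [hempty]
    push_cast
    positivity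
  have hσnn : 0 ≤ σ2 := by
    rw [hσ]
    positivity
  rcases eq_or_lt_of_le hσnn with hσ0 | hσpos
  · -- degenerate: zero variance, all values equal the mean
    have hsq : ∑ i, (x i - xbar) ^ 2 = 0 := by
      have h1 : (1 / (N : ℝ)) * ∑ i, (x i - xbar) ^ 2 = 0 := by rw [← hσ, ← hσ0]
      have h2 : (1 / (N : ℝ)) ≠ 0 := by positivity
      exact (mul_eq_zero.mp h1).resolve_left h2
    have hall : ∀ i, x i = xbar := by
      intro i
      have := (Finset.sum_eq_zero_iff_of_nonneg
        (fun i _ => sq_nonneg (x i - xbar))).mp hsq i (Finset.mem_univ i)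
      have := pow_eq_zero_iff (n := 2) (by norm_num) |>.mp this
      linarith
    have hempty : (Finset.univ.filter
        (fun f : Fin n ↪ Fin N => t ≤ |(∑ i, x (f i)) - n * xbar|)).card = 0 := by
      rw [Finset.card_eq_zero, Finset.filter_eq_empty_iff]
      intro f _
      have : ∑ i : Fin n, x (f i) = n * xbar := by
        rw [Finset.sum_congr rfl (fun i _ => hall (f i)), Finset.sum_const, card_univ,
          Fintype.card_fin, nsmul_eq_mul]
      rw [this]
      simp only [sub_self, abs_zero]
      push_neg
      exact ht
    rw [hempty]
    push_cast
    exact mul_nonneg (mul_nonneg (by norm_num) (Real.exp_pos _).le) (Nat.cast_nonneg _)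
  -- main case
  have hax : ∀ i, a ≤ x i := by
    intro i
    rw [ha]
    exact ciInf_le (Set.Finite.bddBelow (Set.finite_range x)) i
  have hxb : ∀ i, x i ≤ b := by
    intro i
    rw [hb]
    exact le_ciSup (Set.Finite.bddAbove (Set.finite_range x)) i
  have hsuma : (N:ℝ) * a ≤ ∑ i, x i := by
    calc (N:ℝ) * a = ∑ _i : Fin N, a := by
          rw [Finset.sum_const, card_univ, Fintype.card_fin, nsmul_eq_mul]
      _ ≤ ∑ i, x i := Finset.sum_le_sum (fun i _ => hax i)
  have hsumb : ∑ i, x i ≤ (N:ℝ) * b := by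
    calc ∑ i, x i ≤ ∑ _i : Fin N, b := Finset.sum_le_sum (fun i _ => hxb i)
      _ = (N:ℝ) * b := by
          rw [Finset.sum_const, card_univ, Fintype.card_fin, nsmul_eq_mul]
  have haxbar : a ≤ xbar := by
    rw [hxbar, ← sub_nonneg]
    have h : 1 / (N:ℝ) * ∑ i, x i - a = (1/(N:ℝ)) * ((∑ i, x i) - N * a) := by
      first | (field_simp; ring) | field_simp
    rw [h]
    have h2 : (0:ℝ) ≤ (∑ i, x i) - N * a := by linarith
    positivity
  have hxbarb : xbar ≤ b := by
    rw [hxbar, ← sub_nonneg]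
    have h : b - 1 / (N:ℝ) * ∑ i, x i = (1/(N:ℝ)) * ((N:ℝ) * b - ∑ i, x i) := by
      first | (field_simp; ring) | field_simp
    rw [h]
    have : (0:ℝ) ≤ (N:ℝ) * b - ∑ i, x i := by linarith
    positivity
  have hyM : ∀ i, |x i - xbar| ≤ b - a := by
    intro i
    rw [abs_le]
    constructor <;> [linarith [hax i]; linarith [hxb i]]
  have hsumx : ∑ i, x i = (N:ℝ) * xbar := by
    rw [hxbar]
    field_simp
  have hy0 : ∑ i, (x i - xbar) = 0 := by
    rw [Finset.sum_sub_distrib, Finset.sum_const, card_univ, Fintype.card_fin, nsmul_eq_mul,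
      hsumx, sub_self]
  have hyv : ∑ i, (x i - xbar) ^ 2 = (N:ℝ) * σ2 := by
    rw [hσ]
    field_simp
  have hy0' : ∑ i, (xbar - x i) = 0 := by
    rw [Finset.sum_sub_distrib, Finset.sum_const, card_univ, Fintype.card_fin, nsmul_eq_mul,
      hsumx, sub_self]
  have hyv' : ∑ i, (xbar - x i) ^ 2 = (N:ℝ) * σ2 := by
    rw [← hyv]
    exact Finset.sum_congr rfl (fun i _ => by ring)
  have hyM' : ∀ i, |xbar - x i| ≤ b - a := by
    intro i
    rw [abs_sub_comm]
    exact hyM i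
  have tail1 := tail_bound hpos hn.le (fun i => x i - xbar) (b - a) σ2 hy0 hyM hyv hσpos t ht
  have tail2 := tail_bound hpos hn.le (fun i => xbar - x i) (b - a) σ2 hy0' hyM' hyv' hσpos t ht
  -- relate sums
  have hsf : ∀ f : Fin n ↪ Fin N, ∑ i, (x (f i) - xbar) = (∑ i, x (f i)) - n * xbar := by
    intro f
    rw [Finset.sum_sub_distrib, Finset.sum_const, card_univ, Fintype.card_fin, nsmul_eq_mul]
  have hsf' : ∀ f : Fin n ↪ Fin N, ∑ i, (xbar - x (f i)) = -((∑ i, x (f i)) - n * xbar) := by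
    intro f
    rw [Finset.sum_sub_distrib, Finset.sum_const, card_univ, Fintype.card_fin, nsmul_eq_mul]
    ring
  have hsubset : (Finset.univ.filter
        (fun f : Fin n ↪ Fin N => t ≤ |(∑ i, x (f i)) - n * xbar|)) ⊆
      (Finset.univ.filter (fun f : Fin n ↪ Fin N => t ≤ ∑ i, (x (f i) - xbar))) ∪
        (Finset.univ.filter (fun f : Fin n ↪ Fin N => t ≤ ∑ i, (xbar - x (f i)))) := by
    intro f hf
    rw [Finset.mem_filter] at hf
    rcases le_abs.mp hf.2 with h | h
    · apply Finset.mem_union_left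
      rw [Finset.mem_filter]
      exact ⟨Finset.mem_univ f, by rw [hsf f]; exact h⟩
    · apply Finset.mem_union_right
      rw [Finset.mem_filter]
      exact ⟨Finset.mem_univ f, by rw [hsf' f]; exact h⟩
  have hcard : ((Finset.univ.filter
        (fun f : Fin n ↪ Fin N => t ≤ |(∑ i, x (f i)) - n * xbar|)).card : ℝ) ≤
      ((Finset.univ.filter (fun f : Fin n ↪ Fin N => t ≤ ∑ i, (x (f i) - xbar))).card : ℝ) +
      ((Finset.univ.filter (fun f : Fin n ↪ Fin N => t ≤ ∑ i, (xbar - x (f i)))).card : ℝ) := by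
    have h1 := Finset.card_le_card hsubset
    have h2 := Finset.card_union_le
      (Finset.univ.filter (fun f : Fin n ↪ Fin N => t ≤ ∑ i, (x (f i) - xbar)))
      (Finset.univ.filter (fun f : Fin n ↪ Fin N => t ≤ ∑ i, (xbar - x (f i))))
    exact_mod_cast le_trans h1 h2
  rw [hIcard]
  calc ((Finset.univ.filter
        (fun f : Fin n ↪ Fin N => t ≤ |(∑ i, x (f i)) - n * xbar|)).card : ℝ)
      ≤ ((Finset.univ.filter (fun f : Fin n ↪ Fin N => t ≤ ∑ i, (x (f i) - xbar))).card : ℝ) +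
        ((Finset.univ.filter (fun f : Fin n ↪ Fin N => t ≤ ∑ i, (xbar - x (f i)))).card : ℝ) :=
        hcard
    _ ≤ (N.descFactorial n : ℝ) * Real.exp (-(t ^ 2 / 2) / (σ2 * n + (b - a) * t / 3)) +
        (N.descFactorial n : ℝ) * Real.exp (-(t ^ 2 / 2) / (σ2 * n + (b - a) * t / 3)) :=
        add_le_add tail1 tail2
    _ = 2 * Real.exp (-(t ^ 2 / 2) / (σ2 * n + (b - a) * t / 3)) * (N.descFactorial n : ℝ) := by
        ring
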